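/- Given ε > 0, φ m_φ-weakly convex, g proper closed convex, and 0 < μ < 1/m_φ: if z̄ satisfies ‖∇Ψ_μ(z̄)‖ ≤ min{1, μ⁻¹}·ε, then x̄ := prox_{μφ}(z̄) is an ε-critical point of Ψ = φ − g with auxiliary point ȳ := prox_{μg}(z̄); that is, there exists ū ∈ ∂φ(x̄) − ∂g(ȳ) with max{‖ū‖, ‖x̄ − ȳ‖} ≤ ε. -/

import Mathlib

open scoped RealInnerProductSpace

/-- `v` is a general (Fréchet-type) subgradient of `φ` at `x`. -/
def IsGenSubgradientAt {n : ℕ} (φ : EuclideanSpace ℝ (Fin n) → ℝ)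
    (v x : EuclideanSpace ℝ (Fin n)) : Prop :=
  ∀ ε > (0 : ℝ), ∀ᶠ y in nhds x, φ x + ⟪v, y - x⟫ - ε * ‖y - x‖ ≤ φ y

lemma subgrad_of_prox {n : ℕ} (f : EuclideanSpace ℝ (Fin n) → ℝ) (μ : ℝ) (hμ : 0 < μ)
    (z p : EuclideanSpace ℝ (Fin n))
    (h : ∀ y, f p + 1 / (2 * μ) * ‖p - z‖ ^ 2 ≤ f y + 1 / (2 * μ) * ‖y - z‖ ^ 2) :
    IsGenSubgradientAt f ((1 / μ) • (z - p)) p := by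
  intro ε hε
  filter_upwards [Metric.ball_mem_nhds p (show (0:ℝ) < 2 * μ * ε by positivity)] with y hy
  have hy' : ‖y - p‖ < 2 * μ * ε := by
    simpa [dist_eq_norm] using hy
  have h1 := h y
  have key : ‖y - z‖ ^ 2 = ‖y - p‖ ^ 2 + 2 * ⟪y - p, p - z⟫ + ‖p - z‖ ^ 2 := by
    have := norm_add_sq_real (y - p) (p - z)
    simpa using this
  have hin : ⟪(1 / μ) • (z - p), y - p⟫ = (1 / μ) * ⟪z - p, y - p⟫ :=
    real_inner_smul_left _ _ _
  have hsym : ⟪z - p, y - p⟫ = - ⟪y - p, p - z⟫ := by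
    rw [real_inner_comm]
    rw [show (p - z : EuclideanSpace ℝ (Fin n)) = -(z - p) by abel, inner_neg_right]
    ring
  have hnn : (0:ℝ) ≤ ‖y - p‖ := norm_nonneg _
  rw [hin, hsym]
  set a := ⟪y - p, p - z⟫ with ha
  have hb : ‖y - p‖ ^ 2 ≤ 2 * μ * ε * ‖y - p‖ := by nlinarith
  have hc : 1 / (2 * μ) * ‖y - p‖ ^ 2 ≤ ε * ‖y - p‖ := by
    have := mul_le_mul_of_nonneg_left hb (by positivity : (0:ℝ) ≤ 1 / (2 * μ))
    have heq : 1 / (2 * μ) * (2 * μ * ε * ‖y - p‖) = ε * ‖y - p‖ := by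
      field_simp
    linarith [heq ▸ this]
  rw [key] at h1
  have hexp : 1 / (2 * μ) * (‖y - p‖ ^ 2 + 2 * a + ‖p - z‖ ^ 2)
      = 1 / (2 * μ) * ‖y - p‖ ^ 2 + (1 / μ) * a + 1 / (2 * μ) * ‖p - z‖ ^ 2 := by
    field_simp
  rw [hexp] at h1
  linarith

theorem stmt7 {n : ℕ} (φ g : EuclideanSpace ℝ (Fin n) → ℝ) (mφ μ ε : ℝ)
    (hε : 0 < ε) (hm : 0 < mφ) (hμ : 0 < μ) (hμm : μ < 1 / mφ)
    (hφclosed : LowerSemicontinuous φ)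
    (hφweak : ConvexOn ℝ Set.univ (fun x => φ x + mφ / 2 * ‖x‖ ^ 2))
    (hgconv : ConvexOn ℝ Set.univ g) (hgclosed : LowerSemicontinuous g)
    (proxφ proxg : EuclideanSpace ℝ (Fin n) → EuclideanSpace ℝ (Fin n))
    (hproxφ : ∀ z y, φ (proxφ z) + 1 / (2 * μ) * ‖proxφ z - z‖ ^ 2 ≤
      φ y + 1 / (2 * μ) * ‖y - z‖ ^ 2)
    (hproxg : ∀ z y, g (proxg z) + 1 / (2 * μ) * ‖proxg z - z‖ ^ 2 ≤
      g y + 1 / (2 * μ) * ‖y - z‖ ^ 2)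
    (zbar : EuclideanSpace ℝ (Fin n))
    (hgrad : ‖(1 / μ) • (proxg zbar - proxφ zbar)‖ ≤ min 1 μ⁻¹ * ε) :
    ∃ u₁ u₂ : EuclideanSpace ℝ (Fin n),
      IsGenSubgradientAt φ u₁ (proxφ zbar) ∧ IsGenSubgradientAt g u₂ (proxg zbar) ∧
      max ‖u₁ - u₂‖ ‖proxφ zbar - proxg zbar‖ ≤ ε := by
  set x := proxφ zbar
  set y := proxg zbar
  refine ⟨(1 / μ) • (zbar - x), (1 / μ) • (zbar - y),
    subgrad_of_prox φ μ hμ zbar x (hproxφ zbar),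
    subgrad_of_prox g μ hμ zbar y (hproxg zbar), ?_⟩
  have hdiff : (1 / μ) • (zbar - x) - (1 / μ) • (zbar - y) = (1 / μ) • (y - x) := by
    rw [← smul_sub]; congr 1; abel
  have hnorm : ‖(1 / μ) • (y - x)‖ = (1 / μ) * ‖x - y‖ := by
    rw [norm_smul, Real.norm_eq_abs, abs_of_pos (by positivity : (0:ℝ) < 1 / μ),
      norm_sub_rev]
  have hgrad' : ‖(1 / μ) • (y - x)‖ ≤ min 1 μ⁻¹ * ε := hgrad
  have h1 : ‖(1 / μ) • (zbar - x) - (1 / μ) • (zbar - y)‖ ≤ ε := by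
    rw [hdiff]
    calc ‖(1 / μ) • (y - x)‖ ≤ min 1 μ⁻¹ * ε := hgrad'
    _ ≤ 1 * ε := by gcongr; exact min_le_left _ _
    _ = ε := one_mul ε
  have h2 : ‖x - y‖ ≤ ε := by
    have := hgrad'
    rw [hnorm] at this
    have hmin : min 1 μ⁻¹ ≤ μ⁻¹ := min_le_right _ _
    have : (1 / μ) * ‖x - y‖ ≤ μ⁻¹ * ε := le_trans this (by gcongr)
    rw [one_div] at this
    exact (mul_le_mul_iff_right₀ (inv_pos.mpr hμ)).mp this
  exact max_le h1 h2
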